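/- Let F be a non-archimedean local field of residue cardinality ℓ, with Haar probability measure on O_F and valuation val. Let f ∈ O_{F̄}[x] be a monic polynomial with coefficients in the ring of integers of the algebraic closure. Then ∫_{O_F} val(f(x)) dx ≤ deg(f)/(ℓ-1). -/

import Mathlib

open MeasureTheory



lemma aux_norm_multiset_prod {K : Type*} [NormedField K] (s : Multiset K) :
    ‖s.prod‖ = (s.map fun x => ‖x‖).prod := by
  induction s using Multiset.induction with
  | empty => simp
  | cons a s ih => simp [norm_mul, ih]

lemma aux_neg_logb_multiset_prod (b : ℝ) (s : Multiset ℝ) (h : ∀ x ∈ s, x ≠ 0) :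
    -Real.logb b s.prod = (s.map fun x => -Real.logb b x).sum := by
  induction s using Multiset.induction with
  | empty => simp
  | cons a s ih =>
    have ha : a ≠ 0 := h a (Multiset.mem_cons_self a s)
    have hs : s.prod ≠ 0 := Multiset.prod_ne_zero (fun h0 => h 0 (Multiset.mem_cons_of_mem h0) rfl)
    simp only [Multiset.prod_cons, Multiset.map_cons, Multiset.sum_cons]
    rw [Real.logb_mul ha hs, neg_add, ih (fun x hx => h x (Multiset.mem_cons_of_mem hx))]

lemma aux_ofReal_multiset_sum_le (s : Multiset ℝ) :
    ENNReal.ofReal s.sum ≤ (s.map ENNReal.ofReal).sum := by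
  induction s using Multiset.induction with
  | empty => simp
  | cons a s ih =>
    simp only [Multiset.sum_cons, Multiset.map_cons]
    exact (ENNReal.ofReal_add_le).trans (add_le_add_right ih _)

lemma aux_lintegral_multiset_sum {α ι' : Type*} [MeasurableSpace α] (μ : Measure α)
    (s : Multiset ι') (φ : ι' → α → ENNReal) (h : ∀ i, Measurable (φ i)) :
    ∫⁻ x, (s.map fun i => φ i x).sum ∂μ = (s.map fun i => ∫⁻ x, φ i x ∂μ).sum := by
  induction s using Multiset.induction with
  | empty => simp
  | cons a s ih =>
    simp only [Multiset.map_cons, Multiset.sum_cons]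
    rw [lintegral_add_left (h a), ih]

lemma aux_root_norm_le {K : Type*} [NormedField K] [IsUltrametricDist K]
    {f : Polynomial K} (hf : f.Monic) (hcoeff : ∀ i, ‖f.coeff i‖ ≤ 1)
    {r : K} (hr : f.eval r = 0) : ‖r‖ ≤ 1 := by
  by_contra hc
  push_neg at hc
  set n := f.natDegree with hn
  have hn1 : 1 ≤ n := by
    rcases Nat.eq_zero_or_pos n with h0 | h1
    · have : f = 1 := hf.natDegree_eq_zero.mp h0
      simp [this] at hr
    · exact h1
  have heval : f.eval r = ∑ i ∈ Finset.range (n + 1), f.coeff i * r ^ i := by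
    rw [Polynomial.eval_eq_sum_range]
  rw [Finset.sum_range_succ] at heval
  have hcn : f.coeff n = 1 := hf.coeff_natDegree
  have hA : ‖∑ i ∈ Finset.range n, f.coeff i * r ^ i‖ ≤ ‖r‖ ^ (n - 1) := by
    apply IsUltrametricDist.norm_sum_le_of_forall_le_of_nonneg (by positivity)
    intro i hi
    rw [norm_mul, norm_pow]
    calc ‖f.coeff i‖ * ‖r‖ ^ i ≤ 1 * ‖r‖ ^ i := by
          exact mul_le_mul_of_nonneg_right (hcoeff i) (by positivity)
      _ = ‖r‖ ^ i := one_mul _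
      _ ≤ ‖r‖ ^ (n - 1) := pow_le_pow_right₀ hc.le (Nat.le_sub_one_of_lt (Finset.mem_range.mp hi))
  have hlt : ‖r‖ ^ (n - 1) < ‖r‖ ^ n := pow_lt_pow_right₀ hc (Nat.sub_lt hn1 one_pos)
  have hne : ‖∑ i ∈ Finset.range n, f.coeff i * r ^ i‖ ≠ ‖f.coeff n * r ^ n‖ := by
    rw [hcn, one_mul, norm_pow]
    exact ne_of_lt (lt_of_le_of_lt hA hlt)
  have := IsUltrametricDist.norm_add_eq_max_of_norm_ne_norm hne
  rw [← heval, hr] at this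
  have h2 : (0:ℝ) < ‖f.coeff n * r ^ n‖ := by
    rw [hcn, one_mul, norm_pow]; positivity
  simp only [norm_zero] at this
  have := le_max_right ‖∑ i ∈ Finset.range n, f.coeff i * r ^ i‖ ‖f.coeff n * r ^ n‖
  linarith

lemma aux_single_root (ℓ : ℕ) (hℓ : 2 ≤ ℓ)
    {F K : Type*} [NormedField F] [IsUltrametricDist F]
    [NormedField K] [IsUltrametricDist K]
    [MeasurableSpace F] [BorelSpace F]
    (hdisc : ∀ x : F, x ≠ 0 → ∃ k : ℤ, ‖x‖ = (ℓ : ℝ) ^ k)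
    (ι : F →+* K) (hι : ∀ x : F, ‖ι x‖ = ‖x‖)
    (μ : Measure F) [IsProbabilityMeasure μ]
    (hball : ∀ (m : ℕ) (a : F), ‖a‖ ≤ 1 →
      μ {x : F | ‖x - a‖ ≤ (ℓ : ℝ) ^ (-(m : ℤ))} = (ℓ : ENNReal) ^ (-(m : ℤ)))
    (lam : K) (hlam : ‖lam‖ ≤ 1) :
    ∫⁻ x, ENNReal.ofReal (-Real.logb ℓ ‖ι x - lam‖) ∂μ ≤ ENNReal.ofReal (1/((ℓ:ℝ)-1)) := by
  have hL1 : (1:ℝ) < (ℓ:ℝ) := by exact_mod_cast hℓ.trans_lt' one_lt_two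
  have hL0 : (0:ℝ) < (ℓ:ℝ) := lt_trans one_pos hL1
  have hisom : Isometry ι := AddMonoidHomClass.isometry_of_norm ι hι
  have hsubmax : ∀ a b : K, ‖a - b‖ ≤ max ‖a‖ ‖b‖ := fun a b => by
    simpa [sub_eq_add_neg, norm_neg] using IsUltrametricDist.norm_add_le_max a (-b)
  -- measurability of g
  have hmeas : Measurable fun x : F => -Real.logb ℓ ‖ι x - lam‖ := by
    have h1 : Measurable fun x : F => ‖ι x - lam‖ :=
      ((hisom.continuous.sub continuous_const).norm).measurable
    have h2 : Measurable fun y : ℝ => -Real.logb ℓ y := by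
      unfold Real.logb
      exact ((Real.measurable_log.div_const _).comp measurable_id).neg
    exact h2.comp h1
  -- the unit ball is conull
  set B : Set F := {x : F | ‖x‖ ≤ 1} with hB
  have hBmeas : MeasurableSet B := measurableSet_le measurable_norm measurable_const
  have hB1 : μ B = 1 := by
    have := hball 0 0 (by simp)
    simpa using this
  have hBc : μ Bᶜ = 0 := (prob_compl_eq_zero_iff hBmeas).mpr hB1
  -- nonnegativity a.e.
  have hnn : 0 ≤ᵐ[μ] fun x : F => -Real.logb ℓ ‖ι x - lam‖ := by
    have : ∀ x ∈ B, 0 ≤ -Real.logb ℓ ‖ι x - lam‖ := by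
      intro x hx
      have h1 : ‖ι x - lam‖ ≤ 1 := by
        refine (hsubmax _ _).trans (max_le ?_ hlam)
        rw [hι]; exact hx
      exact neg_nonneg.mpr (Real.logb_nonpos hL1 (norm_nonneg _) h1)
    filter_upwards [measure_eq_zero_iff_ae_notMem.mp hBc] with x hx
    exact this x (not_not.mp hx)
  rw [lintegral_eq_lintegral_meas_lt μ hnn hmeas.aemeasurable]
  -- sets S m
  set S : ℕ → Set F := fun m => {x : F | ‖ι x - lam‖ < (ℓ:ℝ) ^ (-(m:ℤ))} with hS
  -- measure bound for S m
  have hSm : ∀ m : ℕ, μ (S m) ≤ (ℓ : ENNReal) ^ (-((m:ℤ)+1)) := by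
    intro m
    by_cases hex : ∃ a ∈ S m, a ∈ B
    · obtain ⟨a, haS, haB⟩ := hex
      have hsub : S m ⊆ {x : F | ‖x - a‖ ≤ (ℓ:ℝ) ^ (-((m+1:ℕ):ℤ))} := by
        intro x hx
        have hd : ‖x - a‖ < (ℓ:ℝ) ^ (-(m:ℤ)) := by
          have : ‖ι x - ι a‖ = ‖(ι x - lam) - (ι a - lam)‖ := by ring_nf
          have h2 := (hsubmax (ι x - lam) (ι a - lam)).trans_lt
            (max_lt hx haS)
          rw [← this] at h2
          rwa [← map_sub, hι] at h2
        rcases eq_or_ne x a with rfl | hne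
        · simp [Set.mem_setOf_eq, zpow_nonneg hL0.le]
        · obtain ⟨k, hk⟩ := hdisc (x - a) (sub_ne_zero.mpr hne)
          have hklt : k < -(m:ℤ) := by
            by_contra hkk
            push_neg at hkk
            exact absurd (hk ▸ hd) (not_lt.mpr (zpow_le_zpow_right₀ hL1.le hkk))
          have : (ℓ:ℝ) ^ k ≤ (ℓ:ℝ) ^ (-((m+1:ℕ):ℤ)) := by
            apply zpow_le_zpow_right₀ hL1.le
            push_cast
            omega
          simpa [Set.mem_setOf_eq, hk] using this
      calc μ (S m) ≤ μ {x : F | ‖x - a‖ ≤ (ℓ:ℝ) ^ (-((m+1:ℕ):ℤ))} := measure_mono hsub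
        _ = (ℓ : ENNReal) ^ (-((m+1:ℕ):ℤ)) := hball (m+1) a haB
        _ = (ℓ : ENNReal) ^ (-((m:ℤ)+1)) := by norm_num
    · push_neg at hex
      have : S m ⊆ Bᶜ := fun x hx => hex x hx
      calc μ (S m) ≤ μ Bᶜ := measure_mono this
        _ = 0 := hBc
        _ ≤ _ := zero_le
  -- covering (0,∞) by Ioc m (m+1)
  have hcover : Set.Ioi (0:ℝ) ⊆ ⋃ m : ℕ, Set.Ioc (m:ℝ) (m+1) := by
    intro t ht
    have ht' : (0:ℝ) < t := ht
    have h1 : 1 ≤ ⌈t⌉₊ := Nat.one_le_ceil_iff.mpr ht'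
    refine Set.mem_iUnion.mpr ⟨⌈t⌉₊ - 1, ?_⟩
    constructor
    · have := Nat.ceil_lt_add_one ht'.le
      push_cast [Nat.cast_sub h1]
      linarith
    · have := Nat.le_ceil t
      push_cast [Nat.cast_sub h1]
      linarith
  calc ∫⁻ t in Set.Ioi (0:ℝ), μ {x : F | t < -Real.logb ℓ ‖ι x - lam‖}
      ≤ ∫⁻ t in ⋃ m : ℕ, Set.Ioc (m:ℝ) (m+1), μ {x : F | t < -Real.logb ℓ ‖ι x - lam‖} :=
        lintegral_mono_set hcover
    _ ≤ ∑' m : ℕ, ∫⁻ t in Set.Ioc (m:ℝ) (m+1), μ {x : F | t < -Real.logb ℓ ‖ι x - lam‖} :=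
        lintegral_iUnion_le _ _
    _ ≤ ∑' m : ℕ, (ℓ : ENNReal) ^ (-((m:ℤ)+1)) := by
        refine ENNReal.tsum_le_tsum fun m => ?_
        have hsub : ∀ t ∈ Set.Ioc (m:ℝ) (m+1), {x : F | t < -Real.logb ℓ ‖ι x - lam‖} ⊆ S m := by
          intro t ht x hx
          simp only [Set.mem_setOf_eq] at hx ⊢
          rcases eq_or_lt_of_le (norm_nonneg (ι x - lam)) with h0 | h0
          · simp only [hS, Set.mem_setOf_eq, ← h0]
            exact zpow_pos hL0 _
          · have hlt : Real.logb ℓ ‖ι x - lam‖ < -(m:ℝ) := by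
              have : (m:ℝ) < t := ht.1
              linarith [hx]
            have := (Real.logb_lt_iff_lt_rpow hL1 h0).mp hlt
            calc ‖ι x - lam‖ < (ℓ:ℝ) ^ (-(m:ℝ)) := this
              _ = (ℓ:ℝ) ^ (-(m:ℤ)) := by
                  rw [← Real.rpow_intCast (ℓ:ℝ) (-(m:ℤ))]
                  norm_num
        calc ∫⁻ t in Set.Ioc (m:ℝ) (m+1), μ {x : F | t < -Real.logb ℓ ‖ι x - lam‖}
            ≤ ∫⁻ _ in Set.Ioc (m:ℝ) (m+1), μ (S m) :=
              setLIntegral_mono measurable_const (fun t ht => measure_mono (hsub t ht))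
          _ = μ (S m) * volume (Set.Ioc (m:ℝ) (m+1)) := by rw [setLIntegral_const]
          _ = μ (S m) := by
              rw [Real.volume_Ioc]
              norm_num
          _ ≤ (ℓ : ENNReal) ^ (-((m:ℤ)+1)) := hSm m
    _ ≤ ENNReal.ofReal (1/((ℓ:ℝ)-1)) := by
        have hterm : ∀ m : ℕ, (ℓ : ENNReal) ^ (-((m:ℤ)+1)) =
            ENNReal.ofReal ((ℓ:ℝ)⁻¹ ^ (m+1)) := by
          intro m
          have hne0 : (ℓ : ENNReal) ≠ 0 := by
            simp only [ne_eq, Nat.cast_eq_zero]; omega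
          have hnetop : (ℓ : ENNReal) ≠ ⊤ := ENNReal.natCast_ne_top ℓ
          have h1 : (-((m:ℤ)+1)) = -(((m+1:ℕ)):ℤ) := by push_cast; ring
          rw [h1, ENNReal.zpow_neg, zpow_natCast]
          rw [ENNReal.ofReal_pow (by positivity), ENNReal.ofReal_inv_of_pos hL0,
            ENNReal.ofReal_natCast, ENNReal.inv_pow]
        simp_rw [hterm]
        have hsummable : Summable fun m : ℕ => (ℓ:ℝ)⁻¹ ^ (m+1) := by
          apply Summable.comp_injective (summable_geometric_of_lt_one (by positivity)
            (inv_lt_one_of_one_lt₀ hL1)) (add_left_injective 1)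
        rw [← ENNReal.ofReal_tsum_of_nonneg (fun m => by positivity) hsummable]
        apply ENNReal.ofReal_le_ofReal
        have : ∑' m : ℕ, (ℓ:ℝ)⁻¹ ^ (m+1) = (ℓ:ℝ)⁻¹ * (1 - (ℓ:ℝ)⁻¹)⁻¹ := by
          simp_rw [pow_succ']
          rw [tsum_mul_left, tsum_geometric_of_lt_one (by positivity) (inv_lt_one_of_one_lt₀ hL1)]
        rw [this, one_div]
        apply le_of_eq
        have hne1 : (ℓ:ℝ) ≠ 0 := by positivity
        have hne2 : (ℓ:ℝ) - 1 ≠ 0 := by linarith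
        have hne3 : 1 - (ℓ:ℝ)⁻¹ ≠ 0 := by
          have : (ℓ:ℝ)⁻¹ < 1 := inv_lt_one_of_one_lt₀ hL1
          linarith
        field_simp


lemma aux_multiset_prod_mem_Icc (s : Multiset ℝ) (h : ∀ x ∈ s, 0 ≤ x ∧ x ≤ 1) :
    0 ≤ s.prod ∧ s.prod ≤ 1 := by
  induction s using Multiset.induction with
  | empty => simp
  | cons a s ih =>
    obtain ⟨ha0, ha1⟩ := h a (Multiset.mem_cons_self a s)
    obtain ⟨hs0, hs1⟩ := ih (fun x hx => h x (Multiset.mem_cons_of_mem hx))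
    rw [Multiset.prod_cons]
    constructor
    · positivity
    · nlinarith

lemma aux_multiset_sum_map_le {ι : Type*} (s : Multiset ι) (f g : ι → ENNReal)
    (h : ∀ i ∈ s, f i ≤ g i) : (s.map f).sum ≤ (s.map g).sum := by
  induction s using Multiset.induction with
  | empty => simp
  | cons a s ih =>
    simp only [Multiset.map_cons, Multiset.sum_cons]
    exact add_le_add (h a (Multiset.mem_cons_self a s))
      (ih (fun x hx => h x (Multiset.mem_cons_of_mem hx)))


/-- Let `F` be a non-archimedean local field of residue cardinality `ℓ`
(abstracted: an ultrametric normed field with discrete value group generated by `ℓ`,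
with Haar probability measure `μ` on the unit ball `O_F`, normalized so that a ball of
radius `ℓ^{-m}` has measure `ℓ^{-m}`), isometrically embedded via `ι` into an
algebraically closed ultrametric normed field `K`. If `f` is a monic polynomial with
coefficients in the valuation ring of `K`, then `∫_{O_F} val(f(x)) dx ≤ deg(f)/(ℓ-1)`,
where `val(y) = -log_ℓ ‖y‖`. -/
theorem integral_val_poly_le (ℓ : ℕ) (hℓ : 2 ≤ ℓ)
    {F K : Type*} [NormedField F] [IsUltrametricDist F]
    [NormedField K] [IsUltrametricDist K] [IsAlgClosed K]
    [MeasurableSpace F] [BorelSpace F]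
    (hdisc : ∀ x : F, x ≠ 0 → ∃ k : ℤ, ‖x‖ = (ℓ : ℝ) ^ k)
    (ι : F →+* K) (hι : ∀ x : F, ‖ι x‖ = ‖x‖)
    (μ : Measure F) [IsProbabilityMeasure μ]
    (hball : ∀ (m : ℕ) (a : F), ‖a‖ ≤ 1 →
      μ {x : F | ‖x - a‖ ≤ (ℓ : ℝ) ^ (-(m : ℤ))} = (ℓ : ENNReal) ^ (-(m : ℤ)))
    (f : Polynomial K) (hf : f.Monic) (hcoeff : ∀ i, ‖f.coeff i‖ ≤ 1) :
    ∫ x, (-Real.logb ℓ ‖f.eval (ι x)‖) ∂μ ≤ (f.natDegree : ℝ) / ((ℓ : ℝ) - 1) := by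
  have hL1 : (1:ℝ) < (ℓ:ℝ) := by exact_mod_cast hℓ.trans_lt' one_lt_two
  have hL0 : (0:ℝ) < (ℓ:ℝ) := lt_trans one_pos hL1
  have hisom : Isometry ι := AddMonoidHomClass.isometry_of_norm ι hι
  have hsubmax : ∀ a b : K, ‖a - b‖ ≤ max ‖a‖ ‖b‖ := fun a b => by
    simpa [sub_eq_add_neg, norm_neg] using IsUltrametricDist.norm_add_le_max a (-b)
  set R : Multiset K := f.roots with hR
  have hfact : f = (R.map fun a => Polynomial.X - Polynomial.C a).prod :=
    (IsAlgClosed.splits f).eq_prod_roots_of_monic hf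
  have hcard : Multiset.card R = f.natDegree := by
    conv_rhs => rw [hfact]
    rw [Polynomial.natDegree_multiset_prod_X_sub_C_eq_card]
  have heval : ∀ y : K, ‖f.eval y‖ = (R.map fun a => ‖y - a‖).prod := by
    intro y
    conv_lhs => rw [hfact]
    rw [Polynomial.eval_multiset_prod, aux_norm_multiset_prod, Multiset.map_map,
      Multiset.map_map]
    simp [Function.comp_def]
  have hroots_le : ∀ a ∈ R, ‖a‖ ≤ 1 := fun a ha =>
    aux_root_norm_le hf hcoeff (Polynomial.isRoot_of_mem_roots ha)
  -- measurability
  have hmeas : Measurable fun x : F => -Real.logb ℓ ‖f.eval (ι x)‖ := by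
    have h1 : Measurable fun x : F => ‖f.eval (ι x)‖ :=
      ((f.continuous.comp hisom.continuous).norm).measurable
    have h2 : Measurable fun y : ℝ => -Real.logb ℓ y := by
      unfold Real.logb
      exact ((Real.measurable_log.div_const _).comp measurable_id).neg
    exact h2.comp h1
  -- unit ball conull
  set B : Set F := {x : F | ‖x‖ ≤ 1} with hB
  have hBmeas : MeasurableSet B := measurableSet_le measurable_norm measurable_const
  have hB1 : μ B = 1 := by
    have := hball 0 0 (by simp)
    simpa using this
  have hBc : μ Bᶜ = 0 := (prob_compl_eq_zero_iff hBmeas).mpr hB1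
  have haeB : ∀ᵐ x ∂μ, x ∈ B := by
    filter_upwards [measure_eq_zero_iff_ae_notMem.mp hBc] with x hx
    exact not_not.mp hx
  -- factor norms ≤ 1 on B
  have hfac_le : ∀ x ∈ B, ∀ a ∈ R, ‖ι x - a‖ ≤ 1 := by
    intro x hx a ha
    refine (hsubmax _ _).trans (max_le ?_ (hroots_le a ha))
    rw [hι]; exact hx
  -- nonnegativity a.e.
  have hnn : 0 ≤ᵐ[μ] fun x : F => -Real.logb ℓ ‖f.eval (ι x)‖ := by
    filter_upwards [haeB] with x hx
    have h1 : ‖f.eval (ι x)‖ ≤ 1 := by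
      rw [heval]
      exact (aux_multiset_prod_mem_Icc _ (by
        intro r hr
        obtain ⟨a, ha, rfl⟩ := Multiset.mem_map.mp hr
        exact ⟨norm_nonneg _, hfac_le x hx a ha⟩)).2
    exact neg_nonneg.mpr (Real.logb_nonpos hL1 (norm_nonneg _) h1)
  rw [integral_eq_lintegral_of_nonneg_ae hnn hmeas.aestronglyMeasurable]
  -- pointwise a.e. bound by sum over roots
  have h_ae : ∀ᵐ x ∂μ, ENNReal.ofReal (-Real.logb ℓ ‖f.eval (ι x)‖) ≤
      (R.map fun a => ENNReal.ofReal (-Real.logb ℓ ‖ι x - a‖)).sum := by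
    filter_upwards [haeB] with x _
    by_cases h0 : ‖f.eval (ι x)‖ = 0
    · rw [h0, Real.logb_zero, neg_zero, ENNReal.ofReal_zero]
      exact zero_le
    · have hfac_ne : ∀ r ∈ R.map fun a => ‖ι x - a‖, r ≠ 0 := by
        intro r hr hr0
        exact h0 (by rw [heval]; exact Multiset.prod_eq_zero (hr0 ▸ hr))
      calc ENNReal.ofReal (-Real.logb ℓ ‖f.eval (ι x)‖)
          = ENNReal.ofReal (((R.map fun a => ‖ι x - a‖).map
              fun t => -Real.logb ℓ t).sum) := by
            rw [heval, aux_neg_logb_multiset_prod _ _ hfac_ne]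
        _ ≤ (((R.map fun a => ‖ι x - a‖).map fun t => -Real.logb ℓ t).map
              ENNReal.ofReal).sum := aux_ofReal_multiset_sum_le _
        _ = (R.map fun a => ENNReal.ofReal (-Real.logb ℓ ‖ι x - a‖)).sum := by
            simp [Multiset.map_map, Function.comp_def]
  -- each single root integral
  have hone : ∀ a ∈ R, ∫⁻ x, ENNReal.ofReal (-Real.logb ℓ ‖ι x - a‖) ∂μ ≤
      ENNReal.ofReal (1/((ℓ:ℝ)-1)) := fun a ha =>
    aux_single_root ℓ hℓ hdisc ι hι μ hball a (hroots_le a ha)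
  have hmeas1 : ∀ a : K, Measurable fun x : F => ENNReal.ofReal (-Real.logb ℓ ‖ι x - a‖) := by
    intro a
    have h1 : Measurable fun x : F => ‖ι x - a‖ :=
      ((hisom.continuous.sub continuous_const).norm).measurable
    have h2 : Measurable fun y : ℝ => -Real.logb ℓ y := by
      unfold Real.logb
      exact ((Real.measurable_log.div_const _).comp measurable_id).neg
    exact ENNReal.measurable_ofReal.comp (h2.comp h1)
  have hlint : ∫⁻ x, ENNReal.ofReal (-Real.logb ℓ ‖f.eval (ι x)‖) ∂μ ≤
      ENNReal.ofReal ((f.natDegree : ℝ) / ((ℓ:ℝ)-1)) := by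
    calc ∫⁻ x, ENNReal.ofReal (-Real.logb ℓ ‖f.eval (ι x)‖) ∂μ
        ≤ ∫⁻ x, (R.map fun a => ENNReal.ofReal (-Real.logb ℓ ‖ι x - a‖)).sum ∂μ :=
          lintegral_mono_ae h_ae
      _ = (R.map fun a => ∫⁻ x, ENNReal.ofReal (-Real.logb ℓ ‖ι x - a‖) ∂μ).sum :=
          aux_lintegral_multiset_sum μ R _ hmeas1
      _ ≤ (R.map fun _ => ENNReal.ofReal (1/((ℓ:ℝ)-1))).sum :=
          aux_multiset_sum_map_le R _ _ hone
      _ = Multiset.card R • ENNReal.ofReal (1/((ℓ:ℝ)-1)) := by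
          rw [Multiset.map_const', Multiset.sum_replicate]
      _ = ENNReal.ofReal ((f.natDegree : ℝ) / ((ℓ:ℝ)-1)) := by
          rw [hcard, nsmul_eq_mul, ← ENNReal.ofReal_natCast,
            ← ENNReal.ofReal_mul (by positivity)]
          congr 1
          rw [mul_one_div]
  exact ENNReal.toReal_le_of_le_ofReal (div_nonneg (Nat.cast_nonneg _) (by linarith)) hlint
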